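/- Let G be a group and let S be a nonempty proper subset of G. For every h ∈ G, the Cayley poset P(G,S) is a Cayley representation of G if and only if P(G,Sh) is a Cayley representation of G, where Sh = {sh : s ∈ S}. -/

import Mathlib

variable {G : Type*}

/-- The order relation of the Cayley poset `P(G,S)`: the underlying set is the disjoint
union of two copies of `G` (`Sum.inl g` is written `g`, `Sum.inr h` is written `h'`),
with `g < h'` iff `g⁻¹ * h ∈ S`, and no other distinct elements comparable. -/
def cayleyLE [Group G] (S : Set G) : G ⊕ G → G ⊕ G → Prop
  | Sum.inl g, Sum.inl h => g = h
  | Sum.inl g, Sum.inr h => g⁻¹ * h ∈ S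
  | Sum.inr _, Sum.inl _ => False
  | Sum.inr g, Sum.inr h => g = h

/-- The Cayley poset `P(G,S)` as a type synonym for `G ⊕ G`. -/
def CayleyPoset (G : Type*) [Group G] (S : Set G) : Type _ := G ⊕ G

instance [Group G] (S : Set G) : PartialOrder (CayleyPoset G S) where
  le x y := cayleyLE S x y
  le_refl x := by cases x <;> exact rfl
  le_trans x y z hxy hyz := by
    cases x <;> cases y <;> cases z <;> simp_all [cayleyLE]
  le_antisymm x y hxy hyx := by
    cases x <;> cases y <;> simp_all [cayleyLE] <;> (subst_vars; rfl)

/-- The map `L(g)` on `P(G,S)`: `h ↦ g*h` on minimal points and `h' ↦ (g*h)'` on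
maximal points. -/
def cayleyL [Group G] (g : G) : G ⊕ G → G ⊕ G
  | Sum.inl h => Sum.inl (g * h)
  | Sum.inr h => Sum.inr (g * h)

/-- `P(G,S)` is a Cayley representation of `G` if every order automorphism of the
Cayley poset `P(G,S)` equals `L(g)` for some `g ∈ G`. -/
def IsCayleyRep (G : Type*) [Group G] (S : Set G) : Prop :=
  ∀ φ : CayleyPoset G S ≃o CayleyPoset G S,
    ∃ g : G, ∀ p : CayleyPoset G S, φ p = cayleyL g p

/-- For a nonempty proper subset `S ⊆ G` and any `h ∈ G`, `P(G,S)` is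
a Cayley representation of `G` iff `P(G, Sh)` is, where `Sh = {s*h : s ∈ S}`. -/
theorem cayleyRep_iff_right_translate (G : Type*) [Group G] (S : Set G)
    (hne : S.Nonempty) (hproper : S ≠ Set.univ) (h : G) :
    IsCayleyRep G S ↔ IsCayleyRep G ((fun s => s * h) '' S) := by
  -- The order isomorphism P(G,S) ≃o P(G,Sh) : identity on minimal points,
  -- right translation by h on maximal points.
  set T : Set G := (fun s => s * h) '' S with hT
  let e : CayleyPoset G S ≃o CayleyPoset G T :=
    { toFun := Sum.map id (· * h)
      invFun := Sum.map id (· * h⁻¹)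
      left_inv := by rintro (a | a) <;> simp <;> rfl
      right_inv := by rintro (a | a) <;> simp <;> rfl
      map_rel_iff' := by
        rintro (a | a) (b | b)
        · rfl
        · show a⁻¹ * (b * h) ∈ T ↔ a⁻¹ * b ∈ S
          constructor
          · rintro ⟨s, hs, hsh⟩
            have : s = a⁻¹ * b :=
              mul_right_cancel (b := h) (by rw [show s * h = a⁻¹ * (b * h) from hsh, mul_assoc])
            rwa [this] at hs
          · intro hab
            exact ⟨a⁻¹ * b, hab, by simp [mul_assoc]⟩
        · rfl
        · show a * h = b * h ↔ a = b
          exact mul_left_inj h }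
  have hcomm : ∀ (g : G) (p : CayleyPoset G S),
      e (cayleyL g p) = cayleyL g (e p) := by
    rintro g (a | a) <;> simp [e, cayleyL, mul_assoc]
    · rfl
    · exact congrArg Sum.inr (mul_assoc g a h)
  constructor
  · intro H φ
    obtain ⟨g, hg⟩ := H ((e.trans φ).trans e.symm)
    refine ⟨g, fun p => ?_⟩
    have := hg (e.symm p)
    simp only [OrderIso.trans_apply] at this
    have h2 : φ (e (e.symm p)) = e (cayleyL g (e.symm p)) := by
      rw [← this]; simp
    rw [e.apply_symm_apply] at h2
    rw [h2, hcomm, e.apply_symm_apply]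
  · intro H φ
    obtain ⟨g, hg⟩ := H ((e.symm.trans φ).trans e)
    refine ⟨g, fun p => ?_⟩
    have := hg (e p)
    simp only [OrderIso.trans_apply, e.symm_apply_apply] at this
    have h2 : φ p = e.symm (cayleyL g (e p)) := by
      rw [← this]; simp
    rw [← hcomm] at h2
    exact h2.trans (e.symm_apply_apply _)
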